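/- Let r > 1 and let J be a quantum annulus unitary on a complex Hilbert space H with ‖J‖ = ‖J⁻¹‖ = r. For complex scalars a, b ∈ ℂ, the operator a·J + b·(J*)⁻¹ is unitary if and only if |a| = |b| and |r·a + r⁻¹·b| = 1; equivalently, if and only if there exists θ ∈ ℝ such that b = a·e^{iθ} and |a|² = (r² + r⁻² + 2cos θ)⁻¹. -/

import Mathlib

open ContinuousLinearMap ComplexConjugate

lemma sq_one_aux (x : ℝ) (hx : 0 ≤ x) (h : x ^ 2 = 1) : x = 1 := by
  rcases mul_eq_zero.mp (show (x - 1) * (x + 1) = 0 by linear_combination h) with h' | h'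
  · linarith
  · linarith

lemma mul_conj_abs (z : ℂ) : z * conj z = ((‖z‖ : ℝ) : ℂ) ^ 2 := by
  rw [Complex.mul_conj']

lemma expand_left {H : Type*} [NormedAddCommGroup H] [InnerProductSpace ℂ H]
    [CompleteSpace H] (Jc Ji : H →L[ℂ] H) (h1 : Ji * Jc = 1) (a b : ℂ) :
    adjoint (a • Jc + b • adjoint Ji) * (a • Jc + b • adjoint Ji)
      = (conj a * a) • (adjoint Jc * Jc) + (conj b * b) • (Ji * adjoint Ji)
        + (conj a * b + conj b * a) • (1 : H →L[ℂ] H) := by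
  have hss : star Jc * star Ji = (1 : H →L[ℂ] H) := by rw [← star_mul, h1, star_one]
  simp only [← ContinuousLinearMap.star_eq_adjoint, star_add, star_smul, star_star,
    Complex.star_def]
  simp only [mul_add, add_mul, smul_mul_assoc, mul_smul_comm, smul_smul]
  rw [hss, h1]
  module

lemma expand_right {H : Type*} [NormedAddCommGroup H] [InnerProductSpace ℂ H]
    [CompleteSpace H] (Jc Ji : H →L[ℂ] H) (h2 : Jc * Ji = 1) (a b : ℂ) :
    (a • Jc + b • adjoint Ji) * adjoint (a • Jc + b • adjoint Ji)
      = (conj a * a) • (Jc * adjoint Jc) + (conj b * b) • (adjoint Ji * Ji)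
        + (a * conj b + b * conj a) • (1 : H →L[ℂ] H) := by
  have hss : star Ji * star Jc = (1 : H →L[ℂ] H) := by rw [← star_mul, h2, star_one]
  simp only [← ContinuousLinearMap.star_eq_adjoint, star_add, star_smul, star_star,
    Complex.star_def]
  simp only [mul_add, add_mul, smul_mul_assoc, mul_smul_comm, smul_smul]
  rw [hss, h2]
  module

lemma key_scalar (r : ℝ) (hr0 : r ≠ 0) (a b : ℂ) :
    ((r : ℂ) * a + ((r⁻¹ : ℝ) : ℂ) * b) * conj ((r : ℂ) * a + ((r⁻¹ : ℝ) : ℂ) * b)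
      = conj b * b * (((r ^ 2 + r⁻¹ ^ 2 : ℝ)) : ℂ) + (conj a * b + conj b * a)
        + ((r : ℂ) ^ 2) * (conj a * a - conj b * b) := by
  have hrr : (r : ℂ) * ((r : ℂ))⁻¹ = 1 := by
    rw [mul_inv_cancel₀]; exact_mod_cast hr0
  simp only [map_add, map_mul, Complex.conj_ofReal]
  push_cast
  linear_combination (a * conj b + b * conj a) * hrr

lemma part2_aux (r : ℝ) (hr : 1 < r) (a b : ℂ) :
    (‖a‖ = ‖b‖ ∧
        ‖(r : ℂ) * a + ((r⁻¹ : ℝ) : ℂ) * b‖ = 1) ↔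
      ∃ θ : ℝ, b = a * Complex.exp (θ * Complex.I) ∧
        ‖a‖ ^ 2 = (r ^ 2 + r⁻¹ ^ 2 + 2 * Real.cos θ)⁻¹ := by
  have hrpos : (0:ℝ) < r := by linarith
  have h1r : r * r⁻¹ = 1 := mul_inv_cancel₀ (ne_of_gt hrpos)
  have hrinvlt : r⁻¹ < 1 := by
    rw [← one_div]; exact (div_lt_one hrpos).mpr hr
  have hd : 0 < r - r⁻¹ := by linarith
  have hspos : ∀ θ : ℝ, 0 < r ^ 2 + r⁻¹ ^ 2 + 2 * Real.cos θ := by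
    intro θ
    nlinarith [Real.neg_one_le_cos θ, mul_pos hd hd, h1r]
  have hw : ∀ θ : ℝ, Complex.normSq ((r : ℂ) + ((r⁻¹ : ℝ) : ℂ) * Complex.exp (θ * Complex.I))
      = r ^ 2 + r⁻¹ ^ 2 + 2 * Real.cos θ := by
    intro θ
    simp only [Complex.normSq_apply, Complex.add_re, Complex.add_im, Complex.mul_re,
      Complex.mul_im, Complex.ofReal_re, Complex.ofReal_im,
      Complex.exp_ofReal_mul_I_re, Complex.exp_ofReal_mul_I_im]
    linear_combination (r⁻¹ ^ 2) * (Real.sin_sq_add_cos_sq θ) + 2 * Real.cos θ * h1r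
  have habs_eq : ∀ θ : ℝ, ‖(r : ℂ) * a + ((r⁻¹ : ℝ) : ℂ) * (a * Complex.exp (θ * Complex.I))‖ ^ 2
      = ‖a‖ ^ 2 * (r ^ 2 + r⁻¹ ^ 2 + 2 * Real.cos θ) := by
    intro θ
    rw [show (r : ℂ) * a + ((r⁻¹ : ℝ) : ℂ) * (a * Complex.exp (θ * Complex.I))
        = a * ((r : ℂ) + ((r⁻¹ : ℝ) : ℂ) * Complex.exp (θ * Complex.I)) by ring,
      norm_mul, mul_pow, Complex.sq_norm, Complex.sq_norm, hw θ]
  constructor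
  · rintro ⟨hab, h1⟩
    rcases eq_or_ne a 0 with ha | ha
    · exfalso
      have hb0 : b = 0 := by
        rw [ha, norm_zero] at hab
        exact norm_eq_zero.mp hab.symm
      rw [ha, hb0] at h1
      simp at h1
    · have hane : ‖a‖ ≠ 0 := norm_ne_zero_iff.mpr ha
      obtain ⟨θ, hθ⟩ := (Complex.norm_eq_one_iff (b / a)).mp
        (by rw [norm_div, ← hab, div_self hane])
      have hb : b = a * Complex.exp (θ * Complex.I) := by
        rw [hθ]; field_simp
      refine ⟨θ, hb, ?_⟩
      have := habs_eq θ
      rw [← hb, h1, one_pow] at this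
      exact eq_inv_of_mul_eq_one_left this.symm
  · rintro ⟨θ, hb, ha2⟩
    have hab : ‖a‖ = ‖b‖ := by
      rw [hb, norm_mul, Complex.norm_exp_ofReal_mul_I, mul_one]
    refine ⟨hab, ?_⟩
    have h2 : ‖(r : ℂ) * a + ((r⁻¹ : ℝ) : ℂ) * b‖ ^ 2 = 1 := by
      rw [hb, habs_eq θ, ha2, inv_mul_cancel₀ (ne_of_gt (hspos θ))]
    exact sq_one_aux _ (norm_nonneg _) h2

set_option maxHeartbeats 1000000 in
open ContinuousLinearMap in
/-- Let `J` be a quantum annulus unitary on a complex Hilbert space `H` with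
`‖J‖ = ‖J⁻¹‖ = r`.  For scalars `a, b ∈ ℂ`, the operator `a·J + b·(J*)⁻¹` is unitary if and
only if `|a| = |b|` and `|r·a + r⁻¹·b| = 1`; equivalently, iff there is `θ ∈ ℝ` with
`b = a·e^{iθ}` and `|a|² = (r² + r⁻² + 2 cos θ)⁻¹`. -/
theorem scalar_combination_unitary_iff
    {H : Type*} [NormedAddCommGroup H] [InnerProductSpace ℂ H] [CompleteSpace H]
    (r : ℝ) (hr : 1 < r) (J : (H →L[ℂ] H)ˣ)
    (hJ : adjoint (J : H →L[ℂ] H) * (J : H →L[ℂ] H) +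
        ((J⁻¹ : (H →L[ℂ] H)ˣ) : H →L[ℂ] H) *
          adjoint ((J⁻¹ : (H →L[ℂ] H)ˣ) : H →L[ℂ] H) =
      ((r ^ 2 + r⁻¹ ^ 2 : ℝ) : ℂ) • (1 : H →L[ℂ] H))
    (hJnorm : ‖(J : H →L[ℂ] H)‖ = r)
    (hJinvnorm : ‖((J⁻¹ : (H →L[ℂ] H)ˣ) : H →L[ℂ] H)‖ = r)
    (a b : ℂ) :
    ((adjoint (a • (J : H →L[ℂ] H) +
          b • adjoint ((J⁻¹ : (H →L[ℂ] H)ˣ) : H →L[ℂ] H)) *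
        (a • (J : H →L[ℂ] H) +
          b • adjoint ((J⁻¹ : (H →L[ℂ] H)ˣ) : H →L[ℂ] H)) = 1 ∧
      (a • (J : H →L[ℂ] H) +
          b • adjoint ((J⁻¹ : (H →L[ℂ] H)ˣ) : H →L[ℂ] H)) *
        adjoint (a • (J : H →L[ℂ] H) +
          b • adjoint ((J⁻¹ : (H →L[ℂ] H)ˣ) : H →L[ℂ] H)) = 1) ↔
      (‖a‖ = ‖b‖ ∧
        ‖(r : ℂ) * a + (r⁻¹ : ℝ) * b‖ = 1)) ∧
    ((‖a‖ = ‖b‖ ∧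
        ‖(r : ℂ) * a + (r⁻¹ : ℝ) * b‖ = 1) ↔
      ∃ θ : ℝ, b = a * Complex.exp (θ * Complex.I) ∧
        ‖a‖ ^ 2 = (r ^ 2 + r⁻¹ ^ 2 + 2 * Real.cos θ)⁻¹) := by
  have hrpos : (0:ℝ) < r := by linarith
  have hrne : r ≠ 0 := ne_of_gt hrpos
  set Jc : H →L[ℂ] H := (J : H →L[ℂ] H) with hJc
  set Ji : H →L[ℂ] H := ((J⁻¹ : (H →L[ℂ] H)ˣ) : H →L[ℂ] H) with hJi
  have h1 : Ji * Jc = 1 := J.inv_mul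
  have h2 : Jc * Ji = 1 := J.mul_inv
  have hH : Nontrivial H := by
    rcases subsingleton_or_nontrivial H with hs | hn
    · exfalso
      have h0 : Jc = 0 := Subsingleton.elim _ _
      rw [h0, norm_zero] at hJnorm
      linarith
    · exact hn
  have hone : ‖(1 : H →L[ℂ] H)‖ = 1 := by
    rw [ContinuousLinearMap.one_def]; exact ContinuousLinearMap.norm_id
  have hsmul_inj : ∀ x y : ℂ, x • (1 : H →L[ℂ] H) = y • (1 : H →L[ℂ] H) → x = y := by
    intro x y hxy
    obtain ⟨v, hv⟩ := exists_ne (0 : H)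
    have hval : x • v = y • v := by
      have := congrArg (fun T : H →L[ℂ] H => T v) hxy
      simpa using this
    exact smul_left_injective ℂ hv hval
  have hnormP : ‖adjoint Jc * Jc‖ = r * r := by
    rw [show adjoint Jc * Jc = (adjoint Jc).comp Jc from rfl,
      ContinuousLinearMap.norm_adjoint_comp_self, hJnorm]
  have hnormPinv : ‖Ji * adjoint Ji‖ = r * r := by
    have hadj : ‖adjoint Ji‖ = ‖Ji‖ := ContinuousLinearMap.adjoint.norm_map Ji
    rw [show Ji * adjoint Ji = (adjoint (adjoint Ji)).comp (adjoint Ji) by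
        rw [adjoint_adjoint]; rfl,
      ContinuousLinearMap.norm_adjoint_comp_self, hadj, hJinvnorm]
  have hPinv : Ji * adjoint Ji
      = ((r ^ 2 + r⁻¹ ^ 2 : ℝ) : ℂ) • (1 : H →L[ℂ] H) - adjoint Jc * Jc :=
    eq_sub_of_add_eq' hJ
  have hJQ : Jc * adjoint Jc + adjoint Ji * Ji
      = ((r ^ 2 + r⁻¹ ^ 2 : ℝ) : ℂ) • (1 : H →L[ℂ] H) := by
    have e1 : Jc * (adjoint Jc * Jc) * Ji = Jc * adjoint Jc := by
      rw [← mul_assoc, mul_assoc (Jc * adjoint Jc) Jc Ji, h2, mul_one]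
    have e2 : Jc * (Ji * adjoint Ji) * Ji = adjoint Ji * Ji := by
      rw [← mul_assoc, h2, one_mul]
    have e3 : Jc * (((r ^ 2 + r⁻¹ ^ 2 : ℝ) : ℂ) • (1 : H →L[ℂ] H)) * Ji
        = ((r ^ 2 + r⁻¹ ^ 2 : ℝ) : ℂ) • (1 : H →L[ℂ] H) := by
      rw [mul_smul_comm, mul_one, smul_mul_assoc, h2]
    calc Jc * adjoint Jc + adjoint Ji * Ji
        = Jc * (adjoint Jc * Jc) * Ji + Jc * (Ji * adjoint Ji) * Ji := by rw [e1, e2]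
      _ = Jc * ((adjoint Jc * Jc) + Ji * adjoint Ji) * Ji := by rw [mul_add, add_mul]
      _ = Jc * (((r ^ 2 + r⁻¹ ^ 2 : ℝ) : ℂ) • (1 : H →L[ℂ] H)) * Ji := by rw [hJ]
      _ = ((r ^ 2 + r⁻¹ ^ 2 : ℝ) : ℂ) • (1 : H →L[ℂ] H) := e3
  have hQinv : adjoint Ji * Ji
      = ((r ^ 2 + r⁻¹ ^ 2 : ℝ) : ℂ) • (1 : H →L[ℂ] H) - Jc * adjoint Jc :=
    eq_sub_of_add_eq' hJQ
  have hT1 : adjoint (a • Jc + b • adjoint Ji) * (a • Jc + b • adjoint Ji)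
      = (conj a * a - conj b * b) • (adjoint Jc * Jc)
        + (conj b * b * ((r ^ 2 + r⁻¹ ^ 2 : ℝ) : ℂ) + (conj a * b + conj b * a))
          • (1 : H →L[ℂ] H) := by
    rw [expand_left Jc Ji h1 a b, hPinv]
    module
  have hT2 : (a • Jc + b • adjoint Ji) * adjoint (a • Jc + b • adjoint Ji)
      = (conj a * a - conj b * b) • (Jc * adjoint Jc)
        + (conj b * b * ((r ^ 2 + r⁻¹ ^ 2 : ℝ) : ℂ) + (a * conj b + b * conj a))
          • (1 : H →L[ℂ] H) := by
    rw [expand_right Jc Ji h2 a b, hQinv]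
    module
  constructor
  · constructor
    · rintro ⟨hU1, -⟩
      rw [hT1] at hU1
      have hA : conj a * a - conj b * b = 0 := by
        by_contra hA
        set K : ℂ := conj b * b * ((r ^ 2 + r⁻¹ ^ 2 : ℝ) : ℂ) + (conj a * b + conj b * a)
          with hKdef
        set μ : ℂ := (conj a * a - conj b * b)⁻¹ * (1 - K) with hμdef
        have hPmu : adjoint Jc * Jc = μ • (1 : H →L[ℂ] H) := by
          have h' : (conj a * a - conj b * b) • (adjoint Jc * Jc)
              = (1 - K) • (1 : H →L[ℂ] H) := by
            have h'' : (conj a * a - conj b * b) • (adjoint Jc * Jc)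
                = 1 - K • (1 : H →L[ℂ] H) := eq_sub_of_add_eq hU1
            rw [h'', sub_smul, one_smul]
          calc adjoint Jc * Jc
              = (conj a * a - conj b * b)⁻¹
                  • ((conj a * a - conj b * b) • (adjoint Jc * Jc)) := by
                rw [smul_smul, inv_mul_cancel₀ hA, one_smul]
            _ = μ • (1 : H →L[ℂ] H) := by rw [h', smul_smul]
        have hKc : conj K = K := by
          rw [hKdef]
          simp only [map_add, map_mul, Complex.conj_conj, Complex.conj_ofReal]
          ring
        have hAc : conj (conj a * a - conj b * b) = conj a * a - conj b * b := by
          simp only [map_sub, map_mul, Complex.conj_conj]; ring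
        have hμc : conj μ = μ := by
          rw [hμdef, map_mul, map_inv₀, hAc, map_sub, map_one, hKc]
        have hμre : ((μ.re : ℝ) : ℂ) = μ := Complex.conj_eq_iff_re.mp hμc
        have habs1 : ‖μ‖ = r * r := by
          have hn : ‖μ • (1 : H →L[ℂ] H)‖ = r * r := by rw [← hPmu]; exact hnormP
          rwa [norm_smul, hone, mul_one] at hn
        have hPinv' : Ji * adjoint Ji
            = (((r ^ 2 + r⁻¹ ^ 2 : ℝ) : ℂ) - μ) • (1 : H →L[ℂ] H) := by
          rw [hPinv, hPmu, ← sub_smul]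
        have habs2 : ‖((r ^ 2 + r⁻¹ ^ 2 : ℝ) : ℂ) - μ‖ = r * r := by
          have hn : ‖(((r ^ 2 + r⁻¹ ^ 2 : ℝ) : ℂ) - μ) • (1 : H →L[ℂ] H)‖ = r * r := by
            rw [← hPinv']; exact hnormPinv
          rwa [norm_smul, hone, mul_one] at hn
        have hx1 : |μ.re| = r * r := by
          rw [← Real.norm_eq_abs, ← Complex.norm_real, hμre]; exact habs1
        have hx2 : |r ^ 2 + r⁻¹ ^ 2 - μ.re| = r * r := by
          rw [← Real.norm_eq_abs, ← Complex.norm_real,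
            show ((r ^ 2 + r⁻¹ ^ 2 - μ.re : ℝ) : ℂ)
              = ((r ^ 2 + r⁻¹ ^ 2 : ℝ) : ℂ) - μ by rw [Complex.ofReal_sub, hμre]]
          exact habs2
        have h1r : r * r⁻¹ = 1 := mul_inv_cancel₀ hrne
        have hrr_nonneg : (0:ℝ) ≤ r * r := by positivity
        have hinv2 : r⁻¹ ^ 2 * r ^ 2 = 1 := by field_simp
        have hsq1 : 1 < r ^ 2 := by nlinarith
        rcases (abs_eq hrr_nonneg).mp hx1 with hxa | hxa <;>
          rcases (abs_eq hrr_nonneg).mp hx2 with hxb | hxb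
        · have e : r⁻¹ ^ 2 = r ^ 2 := by nlinarith [pow_two r]
          rw [e] at hinv2
          nlinarith [hinv2, hsq1]
        · nlinarith [sq_nonneg r⁻¹, hsq1, pow_two r]
        · nlinarith [sq_nonneg r⁻¹, hsq1, pow_two r]
        · nlinarith [sq_nonneg r⁻¹, hsq1, pow_two r]
      have hA0 : conj a * a = conj b * b := sub_eq_zero.mp hA
      have habsab : ‖a‖ = ‖b‖ := by
        have h2c : ((‖a‖ : ℝ) : ℂ) ^ 2 = ((‖b‖ : ℝ) : ℂ) ^ 2 := by
          rw [← mul_conj_abs, ← mul_conj_abs]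
          linear_combination hA0
        have h2r : (‖a‖) ^ 2 = (‖b‖) ^ 2 := by exact_mod_cast h2c
        exact (pow_left_inj₀ (norm_nonneg a) (norm_nonneg b)
          (two_ne_zero)).mp h2r
      have hK1 : conj b * b * ((r ^ 2 + r⁻¹ ^ 2 : ℝ) : ℂ) + (conj a * b + conj b * a)
          = 1 := by
        rw [hA, zero_smul, zero_add] at hU1
        exact hsmul_inj _ _ (by rw [one_smul]; exact hU1)
      refine ⟨habsab, ?_⟩
      have hzz : ((r : ℂ) * a + ((r⁻¹ : ℝ) : ℂ) * b)
          * conj ((r : ℂ) * a + ((r⁻¹ : ℝ) : ℂ) * b) = 1 := by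
        rw [key_scalar r hrne a b, hK1, hA, mul_zero, add_zero]
      have hsq : (‖(r : ℂ) * a + ((r⁻¹ : ℝ) : ℂ) * b‖) ^ 2 = 1 := by
        have hm := mul_conj_abs ((r : ℂ) * a + ((r⁻¹ : ℝ) : ℂ) * b)
        rw [hzz] at hm
        exact_mod_cast hm.symm
      exact sq_one_aux _ (norm_nonneg _) hsq
    · rintro ⟨habs, h1abs⟩
      have hA0 : conj a * a = conj b * b := by
        have ha' := mul_conj_abs a
        have hb' := mul_conj_abs b
        rw [habs] at ha'
        linear_combination ha' - hb'
      have hzz : ((r : ℂ) * a + ((r⁻¹ : ℝ) : ℂ) * b)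
          * conj ((r : ℂ) * a + ((r⁻¹ : ℝ) : ℂ) * b) = 1 := by
        have hm := mul_conj_abs ((r : ℂ) * a + ((r⁻¹ : ℝ) : ℂ) * b)
        rw [h1abs] at hm
        simpa using hm
      have hK1 : conj b * b * ((r ^ 2 + r⁻¹ ^ 2 : ℝ) : ℂ) + (conj a * b + conj b * a)
          = 1 := by
        linear_combination hzz - key_scalar r hrne a b - (r : ℂ) ^ 2 * hA0
      constructor
      · rw [hT1, sub_eq_zero_of_eq hA0, zero_smul, zero_add, hK1, one_smul]
      · rw [hT2, sub_eq_zero_of_eq hA0, zero_smul, zero_add,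
          show conj b * b * ((r ^ 2 + r⁻¹ ^ 2 : ℝ) : ℂ) + (a * conj b + b * conj a)
            = 1 by linear_combination hK1, one_smul]
  · exact part2_aux r hr a b
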